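/- arXiv:1801.04428 — 2 statements merged into one kernel-verified Lean document; each statement's English description precedes it below -/
import Mathlib

section
/- For every z in the open unit disk, (1/(2π))·∫_𝔻 (|z - ζ|·(1 - |ζ|²)/|1 - z·conj(ζ)|) dσ(ζ) ≤ (in fact equals) (1-|z|²)³·∫_0^1 [(1/(2π))∫_0^{2π} r²(1-r²)/|1 - z̄ r e^{iθ}|⁶ dθ] dr ≤ 1/4. -/
open Real Complex MeasureTheory intervalIntegral Set Metric

lemma det_restrict_smul (c : ℂ) :
    (((1 : ℂ →L[ℂ] ℂ).smulRight c).restrictScalars ℝ).det = Complex.normSq c := by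
  have h : ((((1 : ℂ →L[ℂ] ℂ).smulRight c).restrictScalars ℝ : ℂ →L[ℝ] ℂ) : ℂ →ₗ[ℝ] ℂ)
      = Algebra.lmul ℝ ℂ c := by
    apply LinearMap.ext
    intro x
    simp [mul_comm]
  show LinearMap.det _ = _
  rw [h, ← Algebra.norm_apply, Algebra.norm_complex_apply]

lemma ball_mem_iff (w : ℂ) : w ∈ Metric.ball (0:ℂ) 1 ↔ ‖w‖ < 1 := by
  simp [Metric.mem_ball, Complex.dist_eq]

lemma polar_symm_eq (p : ℝ × ℝ) :
    Complex.polarCoord.symm p = (p.1 : ℂ) * Complex.exp ((p.2 : ℂ) * Complex.I) := by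
  rw [Complex.polarCoord_symm_apply, Complex.exp_mul_I]
  push_cast
  ring

lemma integral_ball_eq_polar (h : ℂ → ℝ)
    (hc : ContinuousOn h (Metric.closedBall 0 1)) :
    ∫ w in Metric.ball (0:ℂ) 1, h w
      = ∫ r in (0:ℝ)..1, ∫ θ in (0:ℝ)..(2*Real.pi),
          r * h ((r:ℂ) * Complex.exp ((θ:ℂ) * Complex.I)) := by
  set H : ℂ → ℝ := (Metric.ball (0:ℂ) 1).indicator h with hH
  set K : ℝ × ℝ → ℝ := fun p => p.1 * h ((p.1 : ℂ) * Complex.exp ((p.2 : ℂ) * Complex.I))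
    with hK
  set S : Set (ℝ × ℝ) := Ioo (0:ℝ) 1 ×ˢ Ioo (-π) π with hS
  have hSmeas : MeasurableSet S := measurableSet_Ioo.prod measurableSet_Ioo
  have habs : ∀ p : ℝ × ℝ, ‖(p.1 : ℂ) * Complex.exp ((p.2 : ℂ) * Complex.I)‖
      = |p.1| := by
    intro p
    rw [norm_mul, Complex.norm_real, Real.norm_eq_abs, Complex.norm_exp_ofReal_mul_I, mul_one]
  have hKcont : ContinuousOn K (Icc (0:ℝ) 1 ×ˢ Icc (-π) π) := by
    apply (continuous_fst.continuousOn).mul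
    apply hc.comp
    · apply Continuous.continuousOn
      exact (Complex.continuous_ofReal.comp continuous_fst).mul
        (Complex.continuous_exp.comp ((Complex.continuous_ofReal.comp continuous_snd).mul
          continuous_const))
    · intro p hp
      rw [Metric.mem_closedBall, Complex.dist_eq, sub_zero, habs,
        _root_.abs_of_nonneg hp.1.1]
      exact hp.1.2
  have hKint : IntegrableOn K S volume := by
    have : IntegrableOn K (Icc (0:ℝ) 1 ×ˢ Icc (-π) π) volume := hKcont.integrableOn_compact (isCompact_Icc.prod isCompact_Icc)
    exact this.mono_set (Set.prod_mono Ioo_subset_Icc_self Ioo_subset_Icc_self)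
  have step1 : ∫ w in Metric.ball (0:ℂ) 1, h w = ∫ w, H w :=
    (MeasureTheory.integral_indicator measurableSet_ball).symm
  have step2 : ∫ w, H w
      = ∫ p in polarCoord.target, p.1 • H (Complex.polarCoord.symm p) :=
    (Complex.integral_comp_polarCoord_symm H).symm
  have step3 : ∫ p in polarCoord.target, p.1 • H (Complex.polarCoord.symm p)
      = ∫ p in polarCoord.target, S.indicator K p := by
    apply setIntegral_congr_fun (measurableSet_Ioi.prod measurableSet_Ioo)
    intro p hp
    have hp1 : 0 < p.1 := hp.1
    have habs' : ‖Complex.polarCoord.symm p‖ = p.1 := by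
      rw [polar_symm_eq, habs, abs_of_pos hp1]
    by_cases hlt : p.1 < 1
    · have hmem : Complex.polarCoord.symm p ∈ Metric.ball (0:ℂ) 1 := by
        rw [Metric.mem_ball, Complex.dist_eq, sub_zero, habs']
        exact hlt
      have hmemS : p ∈ S := ⟨⟨hp1, hlt⟩, hp.2⟩
      rw [polar_symm_eq] at hmem
      simp only [hH, hK, Set.indicator_of_mem hmem, Set.indicator_of_mem hmemS,
        polar_symm_eq, smul_eq_mul]
    · have hmem : Complex.polarCoord.symm p ∉ Metric.ball (0:ℂ) 1 := by
        rw [Metric.mem_ball, Complex.dist_eq, sub_zero, habs']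
        exact fun hcon => hlt hcon
      have hmemS : p ∉ S := fun hpS => hlt hpS.1.2
      rw [polar_symm_eq] at hmem
      simp only [hH, polar_symm_eq, Set.indicator_of_notMem hmem,
        Set.indicator_of_notMem hmemS, smul_zero]
  have step4 : ∫ p in polarCoord.target, S.indicator K p = ∫ p in S, K p := by
    rw [setIntegral_indicator hSmeas]
    congr 1
    rw [Set.inter_eq_self_of_subset_right]
    exact fun p hp => ⟨Set.Ioo_subset_Ioi_self hp.1, hp.2⟩
  have step5 : ∫ p in S, K p = ∫ r in Ioo (0:ℝ) 1, ∫ θ in Ioo (-π) π, K (r, θ) := by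
    rw [hS, MeasureTheory.Measure.volume_eq_prod, setIntegral_prod K]
    rwa [← MeasureTheory.Measure.volume_eq_prod]
  have step6 : ∀ r : ℝ, ∫ θ in Ioo (-π) π, K (r, θ) = ∫ θ in (0:ℝ)..(2*π), K (r, θ) := by
    intro r
    have hper : Function.Periodic (fun θ => K (r, θ)) (2*π) := by
      intro θ
      simp only [hK]
      congr 3
      push_cast
      rw [add_mul, Complex.exp_add, Complex.exp_two_pi_mul_I, mul_one]
    have e1 : ∫ θ in Ioo (-π) π, K (r, θ) = ∫ θ in (-π)..π, K (r, θ) := by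
      rw [intervalIntegral.integral_of_le (by linarith [Real.pi_pos]),
        ← MeasureTheory.integral_Ioc_eq_integral_Ioo]
    have e2 := hper.intervalIntegral_add_eq (-π) 0
    rw [e1]
    have eπ : -π + 2*π = π := by ring
    rw [eπ] at e2
    rw [e2, zero_add]
  calc ∫ w in Metric.ball (0:ℂ) 1, h w
      = ∫ r in Ioo (0:ℝ) 1, ∫ θ in Ioo (-π) π, K (r, θ) := by
        rw [step1, step2, step3, step4, step5]
    _ = ∫ r in Ioo (0:ℝ) 1, ∫ θ in (0:ℝ)..(2*π), K (r, θ) := by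
        apply setIntegral_congr_fun measurableSet_Ioo
        intro r _
        exact step6 r
    _ = ∫ r in (0:ℝ)..1, ∫ θ in (0:ℝ)..(2*π), K (r, θ) := by
        rw [intervalIntegral.integral_of_le zero_le_one,
          ← MeasureTheory.integral_Ioc_eq_integral_Ioo]
    _ = _ := rfl

-- key algebraic identity
lemma key_identity (z w : ℂ) :
    ‖1 - (starRingEnd ℂ) z * w‖ ^ 2 - ‖z - w‖ ^ 2
      = (1 - ‖z‖ ^ 2) * (1 - ‖w‖ ^ 2) := by
  rw [Complex.sq_norm, Complex.sq_norm, Complex.sq_norm, Complex.sq_norm]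
  simp only [Complex.normSq_apply, Complex.sub_re, Complex.sub_im, Complex.mul_re,
    Complex.mul_im, Complex.one_re, Complex.one_im, Complex.conj_re, Complex.conj_im]
  ring

set_option maxHeartbeats 1000000 in
theorem integral_I4_bound (z : ℂ) (hz : ‖z‖ < 1) :
    (1 / (2 * Real.pi)) * (∫ ζ in Metric.ball (0 : ℂ) 1,
        ‖z - ζ‖ * (1 - ‖ζ‖ ^ 2) / ‖1 - z * (starRingEnd ℂ) ζ‖)
      = (1 - ‖z‖ ^ 2) ^ 3 * ∫ r in (0 : ℝ)..1,
          (1 / (2 * Real.pi)) * ∫ θ in (0 : ℝ)..(2 * Real.pi),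
            r ^ 2 * (1 - r ^ 2)
              / (‖1 - (starRingEnd ℂ) z * (r : ℂ) * Complex.exp ((θ : ℂ) * Complex.I)‖) ^ 6
    ∧ (1 - ‖z‖ ^ 2) ^ 3 * (∫ r in (0 : ℝ)..1,
          (1 / (2 * Real.pi)) * ∫ θ in (0 : ℝ)..(2 * Real.pi),
            r ^ 2 * (1 - r ^ 2)
              / (‖1 - (starRingEnd ℂ) z * (r : ℂ) * Complex.exp ((θ : ℂ) * Complex.I)‖) ^ 6)
        ≤ 1 / 4 := by
  set t : ℂ := (starRingEnd ℂ) z with ht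
  have habs_t : ‖t‖ = ‖z‖ := Complex.norm_conj z
  set c : ℝ := 1 - ‖z‖ ^ 2 with hcdef
  have hc : 0 < c := by nlinarith [norm_nonneg z]
  set φ : ℂ → ℂ := fun w => (z - w) / (1 - t * w) with hφ
  have hden' : ∀ w : ℂ, ‖w‖ ≤ 1 → 1 - t * w ≠ 0 := by
    intro w hw hzero
    have h1 : t * w = 1 := by linear_combination -hzero
    have := congrArg (‖·‖) h1
    rw [norm_mul, norm_one, habs_t] at this
    nlinarith [norm_nonneg w, norm_nonneg z]
  have hden : ∀ w : ℂ, ‖w‖ < 1 → 1 - t * w ≠ 0 := fun w hw => hden' w hw.le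
  have htz : ‖1 - t * z‖ = c := by
    have h1 : t * z = ((Complex.normSq z : ℝ) : ℂ) := by
      rw [ht, mul_comm, Complex.mul_conj]
    rw [h1, ← Complex.ofReal_one, ← Complex.ofReal_sub, Complex.norm_real, Real.norm_eq_abs,
      _root_.abs_of_nonneg]
    · rw [hcdef, Complex.sq_norm]
    · nlinarith [Complex.sq_norm z, norm_nonneg z]
  have htz' : (1 : ℂ) - t * z ≠ 0 := by
    intro h0
    rw [h0, norm_zero] at htz
    exact (ne_of_gt hc) htz.symm
  have hA1 : ∀ w : ℂ, ‖w‖ < 1 → z - φ w = w * (1 - t * z) / (1 - t * w) := by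
    intro w hw
    rw [hφ]
    field_simp [hden w hw]
    have hne : (1:ℂ) - w * t ≠ 0 := by rw [mul_comm]; exact hden w hw
    linear_combination (-z) * inv_mul_cancel₀ hne
  have hA2 : ∀ w : ℂ, ‖w‖ < 1 → 1 - t * φ w = (1 - t * z) / (1 - t * w) := by
    intro w hw
    rw [hφ]
    field_simp [hden w hw]
    ring
  have hmaps : ∀ w : ℂ, ‖w‖ < 1 → ‖φ w‖ < 1 := by
    intro w hw
    have hk := key_identity z w
    rw [← ht] at hk
    have hρ : 0 < ‖1 - t * w‖ := norm_pos_iff.mpr (hden w hw)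
    have hφw : ‖φ w‖ = ‖z - w‖ / ‖1 - t * w‖ := by
      rw [hφ]; exact norm_div _ _
    rw [hφw, div_lt_one hρ]
    have hpos1 : (0:ℝ) < 1 - ‖z‖ ^ 2 := by nlinarith [norm_nonneg z]
    have hpos2 : (0:ℝ) < 1 - ‖w‖ ^ 2 := by nlinarith [norm_nonneg w]
    have hsq : ‖z - w‖ ^ 2 < ‖1 - t * w‖ ^ 2 := by
      nlinarith [mul_pos hpos1 hpos2]
    exact lt_of_pow_lt_pow_left₀ 2 hρ.le hsq
  have hinv : ∀ w : ℂ, ‖w‖ < 1 → φ (φ w) = w := by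
    intro w hw
    have h1 := hA1 w hw
    have h2 := hA2 w hw
    have : φ (φ w) = (z - φ w) / (1 - t * φ w) := rfl
    rw [this, h1, h2]
    field_simp
    rw [mul_div_assoc, div_self (show (1:ℂ) - w * t ≠ 0 by rw [mul_comm]; exact hden w hw)]
    ring
  have hinj : Set.InjOn φ (Metric.ball (0:ℂ) 1) := by
    intro w hw w' hw' hww
    rw [ball_mem_iff] at hw hw'
    rw [← hinv w hw, ← hinv w' hw', hww]
  have himage : φ '' Metric.ball (0:ℂ) 1 = Metric.ball (0:ℂ) 1 := by
    apply Set.Subset.antisymm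
    · rintro ζ ⟨w, hw, rfl⟩
      rw [ball_mem_iff] at hw ⊢
      exact hmaps w hw
    · intro ζ hζ
      rw [ball_mem_iff] at hζ
      exact ⟨φ ζ, (ball_mem_iff _).2 (hmaps ζ hζ), hinv ζ hζ⟩
  set d : ℂ → ℂ := fun w => (t * z - 1) / (1 - t * w) ^ 2 with hd
  set D : ℂ → (ℂ →L[ℝ] ℂ) :=
    fun w => ((1 : ℂ →L[ℂ] ℂ).smulRight (d w)).restrictScalars ℝ with hD
  have hderiv : ∀ w ∈ Metric.ball (0:ℂ) 1,
      HasFDerivWithinAt φ (D w) (Metric.ball (0:ℂ) 1) w := by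
    intro w hw
    rw [ball_mem_iff] at hw
    have h1 : HasDerivAt (fun w : ℂ => z - w) (-1) w := by
      simpa using (hasDerivAt_id w).const_sub z
    have h2 : HasDerivAt (fun w : ℂ => 1 - t * w) (-t) w := by
      simpa using ((hasDerivAt_id w).const_mul t).const_sub 1
    have h3 := h1.div h2 (hden w hw)
    have h4 : HasDerivAt φ (d w) w := by
      refine h3.congr_deriv ?_
      show _ = (t * z - 1) / (1 - t * w) ^ 2
      congr 1
      ring
    exact (h4.hasFDerivAt.restrictScalars ℝ).hasFDerivWithinAt
  set g : ℂ → ℝ := fun ζ =>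
    ‖z - ζ‖ * (1 - ‖ζ‖ ^ 2) / ‖1 - z * (starRingEnd ℂ) ζ‖
    with hg
  set h : ℂ → ℝ := fun w =>
    c ^ 3 * (‖w‖ * (1 - ‖w‖ ^ 2) / ‖1 - t * w‖ ^ 6) with hh
  have hpoint : ∀ w ∈ Metric.ball (0:ℂ) 1, |(D w).det| • g (φ w) = h w := by
    intro w hw
    rw [ball_mem_iff] at hw
    have hρ : 0 < ‖1 - t * w‖ := norm_pos_iff.mpr (hden w hw)
    set ρ : ℝ := ‖1 - t * w‖ with hρdef
    have e1 : ‖z - φ w‖ = ‖w‖ * c / ρ := by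
      rw [hA1 w hw, norm_div, norm_mul, htz]
    have e2 : 1 - ‖φ w‖ ^ 2 = c * (1 - ‖w‖ ^ 2) / ρ ^ 2 := by
      have hφw : ‖φ w‖ = ‖z - w‖ / ρ := norm_div _ _
      have hk := key_identity z w
      rw [← ht] at hk
      rw [hφw, div_pow]
      rw [eq_div_iff (by positivity)]
      have : ρ ^ 2 = ‖1 - t * w‖ ^ 2 := rfl
      field_simp
      nlinarith [hk]
    have e3 : ‖1 - z * (starRingEnd ℂ) (φ w)‖ = c / ρ := by
      have hconj : ‖1 - z * (starRingEnd ℂ) (φ w)‖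
          = ‖1 - t * φ w‖ := by
        rw [← Complex.norm_conj (1 - t * φ w)]
        congr 1
        rw [map_sub, map_one, map_mul, ht, Complex.conj_conj]
      rw [hconj, hA2 w hw, norm_div, htz]
    have e4 : |(D w).det| = c ^ 2 / ρ ^ 4 := by
      rw [hD]
      simp only
      rw [det_restrict_smul, Complex.normSq_eq_norm_sq]
      have : ‖d w‖ = c / ρ ^ 2 := by
        rw [hd]
        simp only
        rw [norm_div, norm_pow]
        congr 1
        rw [show t * z - 1 = -(1 - t * z) by ring, norm_neg, htz]
      rw [this, _root_.abs_of_nonneg (by positivity)]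
      field_simp
    rw [hg, hh, smul_eq_mul]
    simp only
    rw [e1, e2, e3, e4]
    have hcne : c ≠ 0 := ne_of_gt hc
    have hρne : ρ ≠ 0 := ne_of_gt hρ
    rw [← hρdef]
    field_simp
  have hH_cont : ∀ (q : ℂ → ℝ), ContinuousOn q (Metric.closedBall 0 1) →
      IntegrableOn q (Metric.ball (0:ℂ) 1) volume := fun q hq =>
    (hq.integrableOn_compact (isCompact_closedBall 0 1)).mono_set ball_subset_closedBall
  have hden_cb : ∀ w ∈ Metric.closedBall (0:ℂ) 1, 1 - t * w ≠ 0 := by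
    intro w hw
    rw [Metric.mem_closedBall, Complex.dist_eq, sub_zero] at hw
    exact hden' w hw
  have hh_cont : ContinuousOn h (Metric.closedBall 0 1) := by
    rw [hh]
    apply continuousOn_const.mul
    apply ContinuousOn.div
    · exact (continuous_norm.continuousOn).mul
        (continuousOn_const.sub ((continuous_norm.continuousOn).pow 2))
    · exact ((continuous_norm.comp
        (continuous_const.sub (continuous_const.mul continuous_id))).pow 6).continuousOn
    · intro w hw
      exact pow_ne_zero 6 (norm_ne_zero_iff.mpr (hden_cb w hw))
  -- change of variables
  have E1 : ∫ ζ in Metric.ball (0:ℂ) 1, g ζ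
      = ∫ w in Metric.ball (0:ℂ) 1, |(D w).det| • g (φ w) := by
    conv_lhs => rw [← himage]
    exact integral_image_eq_integral_abs_det_fderiv_smul volume measurableSet_ball hderiv hinj g
  have E2 : ∫ w in Metric.ball (0:ℂ) 1, |(D w).det| • g (φ w)
      = ∫ w in Metric.ball (0:ℂ) 1, h w :=
    setIntegral_congr_fun measurableSet_ball hpoint
  have E3 := integral_ball_eq_polar h hh_cont
  set Y : ℝ → ℝ := fun r => ∫ θ in (0:ℝ)..(2*π),
      r ^ 2 * (1 - r ^ 2) / ‖1 - t * (r:ℂ) * Complex.exp ((θ:ℂ) * Complex.I)‖ ^ 6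
    with hY
  have E4 : (∫ r in (0:ℝ)..1, ∫ θ in (0:ℝ)..(2*π),
        r * h ((r:ℂ) * Complex.exp ((θ:ℂ) * Complex.I)))
      = ∫ r in (0:ℝ)..1, c ^ 3 * Y r := by
    apply intervalIntegral.integral_congr
    intro r hr
    have hr0 : 0 ≤ r := by
      rw [Set.uIcc_of_le zero_le_one] at hr
      exact hr.1
    rw [hY]
    simp only
    rw [← intervalIntegral.integral_const_mul]
    apply intervalIntegral.integral_congr
    intro θ _
    have habsr : ‖(r:ℂ) * Complex.exp ((θ:ℂ) * Complex.I)‖ = r := by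
      rw [norm_mul, Complex.norm_real, Real.norm_eq_abs, Complex.norm_exp_ofReal_mul_I, mul_one,
        _root_.abs_of_nonneg hr0]
    rw [hh]
    simp only
    rw [habsr, show t * ((r:ℂ) * Complex.exp ((θ:ℂ) * Complex.I))
      = t * (r:ℂ) * Complex.exp ((θ:ℂ) * Complex.I) from (mul_assoc _ _ _).symm]
    ring
  have hgint : ∫ ζ in Metric.ball (0:ℂ) 1, g ζ = c ^ 3 * ∫ r in (0:ℝ)..1, Y r := by
    rw [E1, E2, E3, E4, intervalIntegral.integral_const_mul]
  -- the equality part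
  have heq : (1 / (2 * π)) * (∫ ζ in Metric.ball (0 : ℂ) 1, g ζ)
      = c ^ 3 * ∫ r in (0 : ℝ)..1, (1 / (2 * π)) * Y r := by
    rw [hgint, intervalIntegral.integral_const_mul]
    ring
  constructor
  · exact heq
  · rw [← heq]
    -- pointwise bound g ζ ≤ 1 - |ζ|²
    have hgle : ∀ ζ ∈ Metric.ball (0:ℂ) 1, g ζ ≤ 1 - ‖ζ‖ ^ 2 := by
      intro ζ hζ
      rw [ball_mem_iff] at hζ
      have hconj : ‖1 - z * (starRingEnd ℂ) ζ‖ = ‖1 - t * ζ‖ := by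
        rw [← Complex.norm_conj (1 - t * ζ)]
        congr 1
        rw [map_sub, map_one, map_mul, ht, Complex.conj_conj]
      have hpos : 0 < ‖1 - t * ζ‖ := norm_pos_iff.mpr (hden ζ hζ)
      have hk := key_identity z ζ
      rw [← ht] at hk
      have hnum : ‖z - ζ‖ ≤ ‖1 - t * ζ‖ := by
        have hsq : ‖z - ζ‖ ^ 2 ≤ ‖1 - t * ζ‖ ^ 2 := by
          nlinarith [norm_nonneg ζ, norm_nonneg z,
            mul_nonneg (le_of_lt hc) (show (0:ℝ) ≤ 1 - ‖ζ‖ ^ 2 by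
              nlinarith [norm_nonneg ζ])]
        exact le_of_pow_le_pow_left₀ two_ne_zero hpos.le hsq
      have hζ2 : (0:ℝ) ≤ 1 - ‖ζ‖ ^ 2 := by nlinarith [norm_nonneg ζ]
      rw [hg]
      simp only
      rw [hconj, div_le_iff₀ hpos]
      calc ‖z - ζ‖ * (1 - ‖ζ‖ ^ 2)
          ≤ ‖1 - t * ζ‖ * (1 - ‖ζ‖ ^ 2) :=
            mul_le_mul_of_nonneg_right hnum hζ2
        _ = (1 - ‖ζ‖ ^ 2) * ‖1 - t * ζ‖ := by ring
    have hq_cont : ContinuousOn (fun ζ : ℂ => 1 - ‖ζ‖ ^ 2)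
        (Metric.closedBall 0 1) :=
      (continuous_const.sub (continuous_norm.pow 2)).continuousOn
    have hg_cont : ContinuousOn g (Metric.closedBall 0 1) := by
      rw [hg]
      apply ContinuousOn.div
      · exact ((continuous_norm.comp (continuous_const.sub continuous_id)).continuousOn).mul
          hq_cont
      · exact (continuous_norm.comp
          (continuous_const.sub (continuous_const.mul Complex.continuous_conj))).continuousOn
      · intro ζ hζ
        have hconj : ‖1 - z * (starRingEnd ℂ) ζ‖ = ‖1 - t * ζ‖ := by
          rw [← Complex.norm_conj (1 - t * ζ)]
          congr 1
          rw [map_sub, map_one, map_mul, ht, Complex.conj_conj]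
        rw [hconj]
        exact norm_ne_zero_iff.mpr (hden_cb ζ hζ)
    have hmono : (∫ ζ in Metric.ball (0:ℂ) 1, g ζ)
        ≤ ∫ ζ in Metric.ball (0:ℂ) 1, (1 - ‖ζ‖ ^ 2) :=
      setIntegral_mono_on (hH_cont g hg_cont) (hH_cont _ hq_cont) measurableSet_ball hgle
    have hval : (∫ ζ in Metric.ball (0:ℂ) 1, (1 - ‖ζ‖ ^ 2)) = π / 2 := by
      rw [integral_ball_eq_polar _ hq_cont]
      have hin : (∫ r in (0:ℝ)..1, ∫ θ in (0:ℝ)..(2*π),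
          r * (1 - ‖(r:ℂ) * Complex.exp ((θ:ℂ) * Complex.I)‖ ^ 2))
          = ∫ r in (0:ℝ)..1, (2*π) * (r - r ^ 3) := by
        apply intervalIntegral.integral_congr
        intro r _
        have h1 : ∀ θ : ℝ, r * (1 - ‖(r:ℂ) * Complex.exp ((θ:ℂ) * Complex.I)‖ ^ 2)
            = r - r ^ 3 := by
          intro θ
          rw [norm_mul, Complex.norm_real, Real.norm_eq_abs, Complex.norm_exp_ofReal_mul_I, mul_one, _root_.sq_abs]
          ring
        simp only [h1]
        rw [intervalIntegral.integral_const, smul_eq_mul]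
        ring
      rw [hin, intervalIntegral.integral_const_mul, intervalIntegral.integral_sub
        (intervalIntegrable_id) ((continuous_pow 3).intervalIntegrable 0 1),
        integral_id, integral_pow]
      norm_num
      ring
    calc (1 / (2 * π)) * (∫ ζ in Metric.ball (0:ℂ) 1, g ζ)
        ≤ (1 / (2 * π)) * (π / 2) := by
          apply mul_le_mul_of_nonneg_left _ (by positivity)
          rw [← hval]
          exact hmono
      _ = 1 / 4 := by
          field_simp
          ring
end

section
/- For all real z₀ ∈ [0,1) and r ∈ [0,1], ∫_0^1 [(1/(2π))·∫_0^{2π} r²(1-r²)/|1 - z₀ r e^{iθ}|⁶ dθ] dr ≤ 1/(4(1-z₀²)³). -/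
open Real Complex intervalIntegral MeasureTheory

noncomputable def cc (n : ℕ) : ℝ := ((n+2).choose 2 : ℝ)

lemma cc_eq (n : ℕ) : 2 * cc n = (n+1) * (n+2) := by
  have h : (n+2).choose 2 * 2 = (n+2) * (n+1) := by
    rw [Nat.choose_two_right]
    exact Nat.div_mul_cancel (by rw [mul_comm]; exact (Nat.even_mul_succ_self (n+1)).two_dvd)
  have hr : (((n+2).choose 2 : ℕ) : ℝ) * 2 = ((n:ℝ)+2)*((n:ℝ)+1) := by exact_mod_cast h
  unfold cc; linarith [hr]

lemma cc_nonneg (n : ℕ) : 0 ≤ cc n := Nat.cast_nonneg _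

lemma summable_cc {x : ℝ} (hx : |x| < 1) : Summable (fun n => cc n * x ^ n) :=
  summable_choose_mul_geometric_of_norm_lt_one 2 (by simpa using hx)

lemma summable_cc2 {x : ℝ} (hx : |x| < 1) : Summable (fun n => (cc n)^2 * x ^ n) := by
  have h : Summable (fun n : ℕ => ‖((((n+2).choose 2)^2 : ℕ) : ℝ) * x ^ n‖) := by
    apply summable_norm_mul_geometric_of_norm_lt_one (k := 4) (by simpa using hx)
    rw [Asymptotics.isBigO_iff]
    refine ⟨81, ?_⟩
    filter_upwards [Filter.eventually_ge_atTop 1] with n hn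
    have hc := cc_eq n
    have hcast : ((((n+2).choose 2)^2 : ℕ) : ℝ) = (cc n)^2 := by push_cast [cc]; ring
    have h2 : (n:ℝ) ≥ 1 := by exact_mod_cast hn
    rw [hcast, Real.norm_eq_abs, Real.norm_eq_abs,
      _root_.abs_of_nonneg (by positivity : (0:ℝ) ≤ (cc n)^2),
      _root_.abs_of_nonneg (by positivity : (0:ℝ) ≤ ((n^4 : ℕ) : ℝ))]
    push_cast
    have hb : cc n ≤ 3*(n:ℝ)^2 := by nlinarith
    nlinarith [cc_nonneg n, sq_nonneg ((n:ℝ)^2)]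
  refine ((summable_norm_iff.mp h)).congr (fun n => ?_)
  push_cast [cc]
  ring

lemma int_exp(k : ℤ) : (∫ θ in (0:ℝ)..(2*Real.pi), Complex.exp (k * θ * Complex.I))
    = if k = 0 then (2*Real.pi : ℂ) else 0 := by
  rcases eq_or_ne k 0 with hk | hk
  · simp [hk, two_pi_pos.le]
  · rw [if_neg hk]
    have h : ∀ θ : ℝ, (k : ℂ) * θ * Complex.I = ((k:ℂ) * Complex.I) * θ := fun θ => by ring
    simp_rw [h]
    rw [integral_exp_mul_complex (by simp [Complex.I_ne_zero, hk])]
    have h1 : Complex.exp ((k:ℂ) * Complex.I * (2*(Real.pi:ℂ))) = 1 := by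
      rw [show (k:ℂ) * Complex.I * (2*(Real.pi:ℂ)) = k * (2 * Real.pi * Complex.I) by
        push_cast; ring]
      exact Complex.exp_int_mul_two_pi_mul_I k
    push_cast
    rw [h1]
    simp

lemma inner_int{a : ℝ} (h0 : 0 ≤ a) (h1 : a < 1) :
    (∫ θ in (0:ℝ)..(2*Real.pi),
      1 / (‖1 - (a:ℂ) * Complex.exp ((θ:ℂ) * Complex.I)‖)^6)
    = 2*Real.pi * ∑' n : ℕ, (cc n)^2 * a^(2*n) := by
  have ha : |a| < 1 := by rwa [_root_.abs_of_nonneg h0]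
  set f1 : ℕ → ℝ → ℂ := fun n θ => (cc n : ℂ) * (a:ℂ)^n * Complex.exp ((n:ℂ) * θ * Complex.I)
    with hf1
  set f2 : ℕ → ℝ → ℂ := fun m θ => (cc m : ℂ) * (a:ℂ)^m * Complex.exp (-(m:ℂ) * θ * Complex.I)
    with hf2
  -- norms
  have hnorm1 : ∀ n θ, ‖f1 n θ‖ = cc n * a ^ n := by
    intro n θ
    simp [hf1, Complex.norm_exp, _root_.abs_of_nonneg h0, _root_.abs_of_nonneg (cc_nonneg n)]
  have hnorm2 : ∀ m θ, ‖f2 m θ‖ = cc m * a ^ m := by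
    intro m θ
    simp [hf2, Complex.norm_exp, _root_.abs_of_nonneg h0, _root_.abs_of_nonneg (cc_nonneg m)]
  have hsum1 : ∀ θ : ℝ, Summable fun n => ‖f1 n θ‖ := fun θ => by
    simp_rw [hnorm1]; exact summable_cc ha
  have hsum2 : ∀ θ : ℝ, Summable fun m => ‖f2 m θ‖ := fun θ => by
    simp_rw [hnorm2]; exact summable_cc ha
  -- pointwise series expansion
  have hpt : ∀ θ : ℝ,
      ((1 / (‖1 - (a:ℂ) * Complex.exp ((θ:ℂ) * Complex.I)‖)^6 : ℝ) : ℂ)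
        = ∑' p : ℕ × ℕ, f1 p.1 θ * f2 p.2 θ := by
    intro θ
    set z : ℂ := (a:ℂ) * Complex.exp ((θ:ℂ) * Complex.I) with hz
    have hznorm : ‖z‖ < 1 := by
      simpa [hz, Complex.norm_exp, _root_.abs_of_nonneg h0] using h1
    have hs1 : HasSum (fun n : ℕ => f1 n θ) (1 / (1 - z)^3) := by
      have := hasSum_choose_mul_geometric_of_norm_lt_one 2 hznorm
      refine this.congr_fun fun n => ?_
      rw [hf1]
      simp only [hz, mul_pow, ← Complex.exp_nat_mul]
      push_cast [cc]
      ring_nf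
    have hs2 : HasSum (fun m : ℕ => f2 m θ) ((starRingEnd ℂ) (1 / (1 - z)^3)) := by
      have h := hs1.mapL Complex.conjCLE.toContinuousLinearMap
      simp only [ContinuousLinearEquiv.coe_coe, Complex.conjCLE_apply] at h
      refine h.congr_fun fun m => ?_
      show f2 m θ = (starRingEnd ℂ) (f1 m θ)
      rw [hf1, hf2]
      simp only [map_mul, map_pow, Complex.conj_ofReal, ← Complex.exp_conj]
      congr 2
      simp only [map_mul, Complex.conj_I, Complex.conj_ofReal, map_natCast]
      ring
    have hmul := tsum_mul_tsum_of_summable_norm (hsum1 θ) (hsum2 θ)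
    rw [hs1.tsum_eq, hs2.tsum_eq] at hmul
    rw [← hmul]
    have hne : ‖1 - z‖ ^ 6 = Complex.normSq (1 - z) ^ 3 := by
      rw [show (6:ℕ) = 2*3 by norm_num, pow_mul, Complex.sq_norm]
    have step1 : ((1 / ‖1 - z‖^6 : ℝ) : ℂ)
        = 1 / ((Complex.normSq (1-z) : ℝ) : ℂ)^3 := by
      rw [hne]; push_cast; ring
    rw [step1, ← Complex.mul_conj, map_div₀, map_one, map_pow, div_mul_div_comm, one_mul,
      mul_pow]
  -- Part B: integrate term by term
  set μ : MeasureTheory.Measure ℝ := volume.restrict (Set.Ioc (0:ℝ) (2*Real.pi)) with hμ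
  set F : ℕ × ℕ → ℝ → ℂ := fun p θ => f1 p.1 θ * f2 p.2 θ with hF
  have hcont : ∀ p : ℕ × ℕ, Continuous (F p) := by
    intro p
    apply Continuous.mul <;>
    · apply Continuous.mul continuous_const
      exact Complex.continuous_exp.comp (by fun_prop)
  have hInt : ∀ p : ℕ × ℕ, Integrable (F p) μ := fun p => (hcont p).integrableOn_Ioc
  have hnormint : ∀ p : ℕ × ℕ,
      (∫ θ, ‖F p θ‖ ∂μ) = (cc p.1 * a ^ p.1) * (cc p.2 * a ^ p.2) * (2*Real.pi) := by
    intro p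
    have : ∀ θ : ℝ, ‖F p θ‖ = (cc p.1 * a ^ p.1) * (cc p.2 * a ^ p.2) := by
      intro θ; rw [hF]; simp only [norm_mul, hnorm1, hnorm2]
    simp_rw [this]
    rw [MeasureTheory.integral_const, hμ, MeasureTheory.measureReal_def, MeasureTheory.Measure.restrict_apply_univ,
      Real.volume_Ioc, smul_eq_mul, sub_zero]
    rw [ENNReal.toReal_ofReal Real.two_pi_pos.le]
    ring
  have hSum : Summable fun p : ℕ × ℕ => ∫ θ, ‖F p θ‖ ∂μ := by
    simp_rw [hnormint]
    exact (((summable_cc ha).mul_of_nonneg (summable_cc ha)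
      (fun n => mul_nonneg (cc_nonneg n) (pow_nonneg h0 n))
      (fun n => mul_nonneg (cc_nonneg n) (pow_nonneg h0 n)))).mul_right _
  have hswap := MeasureTheory.integral_tsum_of_summable_integral_norm hInt hSum
  -- value of each term
  have hFval : ∀ p : ℕ × ℕ, (∫ θ, F p θ ∂μ)
      = if p.1 = p.2 then (((2*Real.pi) * ((cc p.1)^2 * a^(2*p.1)) : ℝ) : ℂ) else 0 := by
    rintro ⟨n, m⟩
    set k : ℤ := (n : ℤ) - (m : ℤ) with hk
    have hFe : ∀ θ : ℝ, F (n, m) θ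
        = ((cc n * cc m * a ^ (n + m) : ℝ) : ℂ)
          * Complex.exp ((k : ℂ) * θ * Complex.I) := by
      intro θ
      rw [hF]
      simp only [hf1, hf2]
      rw [show ((k : ℂ) * θ * Complex.I)
          = (n:ℂ) * θ * Complex.I + (-(m:ℂ)) * θ * Complex.I by rw [hk]; push_cast; ring,
        Complex.exp_add]
      push_cast
      ring
    simp_rw [hFe]
    rw [MeasureTheory.integral_const_mul, hμ,
      ← intervalIntegral.integral_of_le Real.two_pi_pos.le, int_exp]
    rcases eq_or_ne n m with hnm | hnm
    · subst hnm
      rw [if_pos (by rw [hk]; ring), if_pos rfl]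
      push_cast
      ring
    · rw [if_neg (by rw [hk]; exact sub_ne_zero.mpr (by exact_mod_cast hnm)), if_neg hnm,
        mul_zero]
  -- diagonal summation
  have ha2 : |a ^ 2| < 1 := by
    rw [_root_.abs_pow]
    nlinarith [abs_nonneg a]
  have hr : HasSum (fun n : ℕ => ((2*Real.pi) * ((cc n)^2 * a^(2*n)) : ℝ))
      ((2*Real.pi) * ∑' n : ℕ, (cc n)^2 * a^(2*n)) := by
    have hs0 : Summable (fun n : ℕ => (cc n)^2 * a^(2*n)) := by
      simp_rw [pow_mul]
      exact summable_cc2 ha2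
    exact hs0.hasSum.mul_left _
  have hdiag : HasSum
      (fun p : ℕ × ℕ => if p.1 = p.2 then (((2*Real.pi) * ((cc p.1)^2 * a^(2*p.1)) : ℝ) : ℂ) else 0)
      ((((2*Real.pi) * ∑' n : ℕ, (cc n)^2 * a^(2*n) : ℝ)) : ℂ) := by
    have hinj : Function.Injective (fun n : ℕ => ((n, n) : ℕ × ℕ)) :=
      fun x y h => congrArg Prod.fst h
    refine (hinj.hasSum_iff ?_).mp ?_
    · rintro ⟨x, y⟩ hxy
      have : x ≠ y := by
        intro h; exact hxy ⟨x, by simp [h]⟩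
      simp [this]
    · have := hr.mapL Complex.ofRealCLM
      simp only [Complex.ofRealCLM_apply] at this
      refine this.congr_fun fun n => ?_
      simp
  -- put everything together
  have hL : (∑' p : ℕ × ℕ, ∫ θ, F p θ ∂μ)
      = ((((2*Real.pi) * ∑' n : ℕ, (cc n)^2 * a^(2*n) : ℝ)) : ℂ) := by
    rw [tsum_congr hFval]
    exact hdiag.tsum_eq
  have hR : (∫ θ, (∑' p : ℕ × ℕ, F p θ) ∂μ)
      = ((∫ θ in (0:ℝ)..(2*Real.pi),
          1 / (‖1 - (a:ℂ) * Complex.exp ((θ:ℂ) * Complex.I)‖)^6 : ℝ) : ℂ) := by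
    have : (fun θ : ℝ => ∑' p : ℕ × ℕ, F p θ)
        = fun θ : ℝ => ((1 / (‖1 - (a:ℂ) * Complex.exp ((θ:ℂ) * Complex.I)‖)^6 : ℝ) : ℂ) := by
      funext θ; rw [← hpt θ]
    rw [this, hμ, intervalIntegral.integral_of_le Real.two_pi_pos.le]
    exact _root_.integral_ofReal
  rw [hswap, hR] at hL
  exact_mod_cast hL

open Real Complex intervalIntegral in
theorem integral_double_bound (z₀ : ℝ) (hz₀0 : 0 ≤ z₀) (hz₀1 : z₀ < 1) :
    (∫ r in (0 : ℝ)..1, (1 / (2 * Real.pi)) * ∫ θ in (0 : ℝ)..(2 * Real.pi),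
        r ^ 2 * (1 - r ^ 2)
          / (‖1 - (z₀ : ℂ) * (r : ℂ) * Complex.exp ((θ : ℂ) * Complex.I)‖) ^ 6)
      ≤ 1 / (4 * (1 - z₀ ^ 2) ^ 3) := by
  have hx : |z₀ ^ 2| < 1 := by
    rw [_root_.abs_pow, _root_.abs_of_nonneg hz₀0]
    nlinarith
  have hπ : (2 * Real.pi) ≠ 0 := ne_of_gt Real.two_pi_pos
  set g : ℕ → ℝ → ℝ := fun n r => (cc n)^2 * z₀^(2*n) * (r^(2*n+2) * (1 - r^2)) with hg
  -- Step 1: rewrite the integrand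
  have hcong : ∀ r ∈ Set.uIcc (0:ℝ) 1,
      (1 / (2 * Real.pi)) * (∫ θ in (0:ℝ)..(2 * Real.pi),
        r ^ 2 * (1 - r ^ 2)
          / (‖1 - (z₀ : ℂ) * (r : ℂ) * Complex.exp ((θ : ℂ) * Complex.I)‖) ^ 6)
      = ∑' n : ℕ, g n r := by
    intro r hr
    rw [Set.uIcc_of_le zero_le_one] at hr
    obtain ⟨hr0, hr1⟩ := hr
    have har : z₀ * r < 1 := lt_of_le_of_lt (mul_le_of_le_one_right hz₀0 hr1) hz₀1
    have key := inner_int (mul_nonneg hz₀0 hr0) har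
    push_cast at key
    have hpull : (∫ θ in (0:ℝ)..(2 * Real.pi),
        r ^ 2 * (1 - r ^ 2)
          / (‖1 - (z₀ : ℂ) * (r : ℂ) * Complex.exp ((θ : ℂ) * Complex.I)‖) ^ 6)
        = (r ^ 2 * (1 - r ^ 2)) * ∫ θ in (0:ℝ)..(2 * Real.pi),
          1 / (‖1 - (z₀ : ℂ) * (r : ℂ) * Complex.exp ((θ : ℂ) * Complex.I)‖) ^ 6 := by
      rw [← intervalIntegral.integral_const_mul]
      congr 1
      funext θ
      ring
    rw [hpull, key, show (1 / (2 * Real.pi)) * (r ^ 2 * (1 - r ^ 2)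
        * (2 * Real.pi * ∑' n : ℕ, (cc n)^2 * (z₀ * r)^(2*n)))
      = (r ^ 2 * (1 - r ^ 2)) * ∑' n : ℕ, (cc n)^2 * (z₀ * r)^(2*n) by field_simp]
    rw [← tsum_mul_left]
    refine tsum_congr fun n => ?_
    rw [hg]
    simp only []
    rw [mul_pow]
    ring
  rw [intervalIntegral.integral_congr hcong]
  -- Step 2: swap integral and sum
  have hcont : ∀ n : ℕ, Continuous (g n) := by
    intro n
    apply continuous_const.mul
    exact (continuous_pow _).mul (continuous_const.sub (continuous_pow 2))
  have hInt2 : ∀ n : ℕ, Integrable (g n) (volume.restrict (Set.Ioc (0:ℝ) 1)) :=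
    fun n => (hcont n).integrableOn_Ioc
  have hbound : ∀ n : ℕ, (∫ r in Set.Ioc (0:ℝ) 1, ‖g n r‖) ≤ (cc n)^2 * (z₀^2)^n := by
    intro n
    have hz2n : z₀^(2*n) = (z₀^2)^n := by rw [← pow_mul]
    have h1 : ∀ r ∈ Set.Ioc (0:ℝ) 1, ‖g n r‖ ≤ (cc n)^2 * (z₀^2)^n := by
      rintro r ⟨hr0, hr1⟩
      have h12 : (0:ℝ) ≤ 1 - r^2 := by nlinarith
      have hgn : 0 ≤ g n r := by
        rw [hg]
        exact mul_nonneg (by positivity) (mul_nonneg (by positivity) h12)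
      rw [Real.norm_eq_abs, _root_.abs_of_nonneg hgn, hg]
      simp only []
      rw [hz2n]
      have hle : r^(2*n+2) * (1 - r^2) ≤ 1 :=
        mul_le_one₀ (pow_le_one₀ hr0.le hr1) h12 (by nlinarith)
      calc (cc n)^2 * (z₀^2)^n * (r^(2*n+2) * (1-r^2))
          ≤ (cc n)^2 * (z₀^2)^n * 1 :=
            mul_le_mul_of_nonneg_left hle (by positivity)
        _ = (cc n)^2 * (z₀^2)^n := by ring
    calc (∫ r in Set.Ioc (0:ℝ) 1, ‖g n r‖)
        ≤ ∫ _r in Set.Ioc (0:ℝ) 1, (cc n)^2 * (z₀^2)^n := by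
          refine MeasureTheory.setIntegral_mono_on (hInt2 n).norm ?_ measurableSet_Ioc h1
          exact (MeasureTheory.integrableOn_const_iff).mpr
            (Or.inr (by rw [Real.volume_Ioc]; exact ENNReal.ofReal_lt_top))
      _ = (cc n)^2 * (z₀^2)^n := by
          rw [MeasureTheory.setIntegral_const, MeasureTheory.measureReal_def, Real.volume_Ioc, smul_eq_mul]
          norm_num
  have hSum2 : Summable fun n : ℕ => ∫ r in Set.Ioc (0:ℝ) 1, ‖g n r‖ :=
    Summable.of_nonneg_of_le (fun n => MeasureTheory.integral_nonneg fun r => norm_nonneg _)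
      hbound (summable_cc2 hx)
  rw [intervalIntegral.integral_of_le zero_le_one,
    ← MeasureTheory.integral_tsum_of_summable_integral_norm hInt2 hSum2]
  -- Step 3: value of each integral
  have hval : ∀ n : ℕ, (∫ r in Set.Ioc (0:ℝ) 1, g n r)
      = (cc n)^2 * (z₀^2)^n * (1/(2*(n:ℝ)+3) - 1/(2*(n:ℝ)+5)) := by
    intro n
    have hz2n : z₀^(2*n) = (z₀^2)^n := by rw [← pow_mul]
    rw [← intervalIntegral.integral_of_le zero_le_one, hg]
    simp only []
    rw [intervalIntegral.integral_const_mul]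
    have he : ∀ r : ℝ, r^(2*n+2) * (1 - r^2) = r^(2*n+2) - r^(2*n+4) := fun r => by ring
    simp_rw [he]
    rw [intervalIntegral.integral_sub (intervalIntegral.intervalIntegrable_pow _)
      (intervalIntegral.intervalIntegrable_pow _), integral_pow, integral_pow, hz2n]
    have h3 : (0:ℝ) < 2*(n:ℝ)+3 := by positivity
    have h5 : (0:ℝ) < 2*(n:ℝ)+5 := by positivity
    push_cast
    rw [one_pow, one_pow, zero_pow (by omega : 2*n+2+1 ≠ 0), zero_pow (by omega : 2*n+4+1 ≠ 0)]
    push_cast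
    ring
  rw [tsum_congr hval]
  -- Step 4: compare sums
  have hterm : ∀ n : ℕ, (cc n)^2 * (z₀^2)^n * (1/(2*(n:ℝ)+3) - 1/(2*(n:ℝ)+5))
      ≤ (1/4) * (cc n * (z₀^2)^n) := by
    intro n
    have h3 : (0:ℝ) < 2*(n:ℝ)+3 := by positivity
    have h5 : (0:ℝ) < 2*(n:ℝ)+5 := by positivity
    have he : 1/(2*(n:ℝ)+3) - 1/(2*(n:ℝ)+5) = 2/((2*(n:ℝ)+3)*(2*(n:ℝ)+5)) := by
      field_simp
      ring
    have hkey : (cc n)^2 * (1/(2*(n:ℝ)+3) - 1/(2*(n:ℝ)+5)) ≤ (1/4) * cc n := by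
      rw [he, mul_div_assoc', div_le_iff₀ (by positivity)]
      nlinarith [cc_eq n, cc_nonneg n, mul_nonneg (cc_nonneg n) (show (0:ℝ) ≤ 4*(n:ℝ)+7 by positivity)]
    calc (cc n)^2 * (z₀^2)^n * (1/(2*(n:ℝ)+3) - 1/(2*(n:ℝ)+5))
        = ((cc n)^2 * (1/(2*(n:ℝ)+3) - 1/(2*(n:ℝ)+5))) * (z₀^2)^n := by ring
      _ ≤ ((1/4) * cc n) * (z₀^2)^n :=
          mul_le_mul_of_nonneg_right hkey (by positivity)
      _ = (1/4) * (cc n * (z₀^2)^n) := by ring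
  have hsumR : Summable fun n : ℕ => (1/4) * (cc n * (z₀^2)^n) :=
    (summable_cc hx).mul_left _
  have hsumL : Summable fun n : ℕ =>
      (cc n)^2 * (z₀^2)^n * (1/(2*(n:ℝ)+3) - 1/(2*(n:ℝ)+5)) := by
    refine Summable.of_nonneg_of_le (fun n => ?_) (fun n => ?_) (summable_cc2 hx)
    · have h35 : (0:ℝ) ≤ 1/(2*(n:ℝ)+3) - 1/(2*(n:ℝ)+5) := by
        rw [sub_nonneg]
        apply one_div_le_one_div_of_le (by positivity)
        linarith
      exact mul_nonneg (by positivity) h35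
    · have h35 : 1/(2*(n:ℝ)+3) - 1/(2*(n:ℝ)+5) ≤ 1 := by
        have : 1/(2*(n:ℝ)+3) ≤ 1 := by
          rw [div_le_one (by positivity)]
          linarith
        have h5 : 0 < 1/(2*(n:ℝ)+5) := by positivity
        linarith
      calc (cc n)^2 * (z₀^2)^n * (1/(2*(n:ℝ)+3) - 1/(2*(n:ℝ)+5))
          ≤ (cc n)^2 * (z₀^2)^n * 1 := by
            apply mul_le_mul_of_nonneg_left h35 (by positivity)
        _ = (cc n)^2 * (z₀^2)^n := by ring
  refine le_trans (Summable.tsum_le_tsum hterm hsumL hsumR) ?_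
  rw [tsum_mul_left]
  have h := (hasSum_choose_mul_geometric_of_norm_lt_one 2 (by simpa using hx : ‖z₀^2‖ < 1)).tsum_eq
  have hcc : (fun n : ℕ => cc n * (z₀^2)^n) = fun n : ℕ => ((n+2).choose 2 : ℝ) * (z₀^2)^n := rfl
  rw [hcc, h]
  have hfin : (1:ℝ)/4 * (1/(1-z₀^2)^(2+1)) = 1/(4*(1-z₀^2)^3) := by
    rw [div_mul_div_comm, one_mul]
  rw [hfin]
end
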